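/- arXiv:math/0301361 — 2 statements merged into one kernel-verified Lean document; each statement's English description precedes it below -/
import Mathlib

section
/- The bilinear form ψ̃(f∂, g∂) = q^{-1} ∫ (∂³ τ^{-3} f) g is antisymmetric: ψ̃(f∂, g∂) = −ψ̃(g∂, f∂) for all Laurent polynomials f, g. -/
open Finsupp

noncomputable section

/-- Laurent polynomials as finitely supported coefficient functions. -/
abbrev LP := ℤ →₀ ℝ

/-- q-number [m] = (q^m - q^{-m})/(q - q⁻¹). -/
def qn (q : ℝ) (m : ℤ) : ℝ := (q ^ m - q ^ (-m)) / (q - q⁻¹)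

/-- Multiplication of Laurent polynomials. -/
def lmul (f g : LP) : LP := f.sum fun n a => g.sum fun m b => Finsupp.single (n + m) (a * b)

/-- (τ f)(z) = f (q z). -/
def tau (q : ℝ) (f : LP) : LP := f.sum fun n a => Finsupp.single n (q ^ n * a)

/-- τ⁻¹. -/
def tauInv (q : ℝ) (f : LP) : LP := tau q⁻¹ f

/-- ∂_q f (z) = (f(qz) - f(q⁻¹z)) / ((q - q⁻¹) z), i.e. ∂_q z^n = [n] z^{n-1}. -/
def dq (q : ℝ) (f : LP) : LP := f.sum fun n a => Finsupp.single (n - 1) (qn q n * a)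

/-- ∂ = ∂_q τ, so ∂ z^m = q^m [m] z^{m-1}. -/
def dd (q : ℝ) (f : LP) : LP := dq q (tau q f)

/-- ∂̂ = ∂_q τ⁻¹. -/
def dhat (q : ℝ) (f : LP) : LP := dq q (tauInv q f)

/-- Residue: coefficient of z⁻¹. -/
def intg (f : LP) : ℝ := f (-1)


/-- ψ̃(f∂, g∂) = q⁻¹ ∫ (∂³ τ⁻³ f) g. -/
def psiT (q : ℝ) (f g : LP) : ℝ :=
  q⁻¹ * intg (lmul (dd q (dd q (dd q (tauInv q (tauInv q (tauInv q f)))))) g)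

lemma tau_zero (q : ℝ) : tau q 0 = 0 := Finsupp.sum_zero_index
lemma tau_add (q : ℝ) (f g : LP) : tau q (f + g) = tau q f + tau q g :=
  Finsupp.sum_add_index' (fun n => by rw [mul_zero, Finsupp.single_zero])
    (fun n a b => by rw [mul_add, Finsupp.single_add])
lemma tau_single (q : ℝ) (n : ℤ) (a : ℝ) : tau q (single n a) = single n (q ^ n * a) :=
  Finsupp.sum_single_index (by rw [mul_zero, Finsupp.single_zero])

lemma dq_zero (q : ℝ) : dq q 0 = 0 := Finsupp.sum_zero_index
lemma dq_add (q : ℝ) (f g : LP) : dq q (f + g) = dq q f + dq q g :=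
  Finsupp.sum_add_index' (fun n => by rw [mul_zero, Finsupp.single_zero])
    (fun n a b => by rw [mul_add, Finsupp.single_add])
lemma dq_single (q : ℝ) (n : ℤ) (a : ℝ) : dq q (single n a) = single (n-1) (qn q n * a) :=
  Finsupp.sum_single_index (by rw [mul_zero, Finsupp.single_zero])

lemma lmul_zero_left (g : LP) : lmul 0 g = 0 := Finsupp.sum_zero_index
lemma lmul_add_left (f f' g : LP) : lmul (f + f') g = lmul f g + lmul f' g :=
  Finsupp.sum_add_index' (fun n => by simp only [zero_mul, Finsupp.single_zero, Finsupp.sum, Finset.sum_const_zero])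
    (fun n a b => by
      rw [← Finsupp.sum_add]
      exact Finsupp.sum_congr fun m _ => by rw [add_mul, Finsupp.single_add])
lemma lmul_zero_right (f : LP) : lmul f 0 = 0 := by
  unfold lmul
  calc f.sum (fun n a => (0 : LP).sum fun m b => Finsupp.single (n + m) (a * b))
      = f.sum (fun n a => (0 : LP)) :=
        Finsupp.sum_congr fun n _ => Finsupp.sum_zero_index
    _ = 0 := Finset.sum_const_zero
lemma lmul_add_right (f g g' : LP) : lmul f (g + g') = lmul f g + lmul f g' := by
  unfold lmul
  rw [← Finsupp.sum_add]
  exact Finsupp.sum_congr fun n _ =>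
    Finsupp.sum_add_index' (fun m => by rw [mul_zero, Finsupp.single_zero])
      (fun m a b => by rw [mul_add, Finsupp.single_add])
lemma lmul_single_single (n m : ℤ) (a b : ℝ) :
    lmul (single n a) (single m b) = single (n + m) (a * b) := by
  unfold lmul
  rw [Finsupp.sum_single_index, Finsupp.sum_single_index]
  · rw [mul_zero, Finsupp.single_zero]
  · rw [Finsupp.sum_single_index (by rw [mul_zero, Finsupp.single_zero]), zero_mul,
      Finsupp.single_zero]

lemma intg_single (k : ℤ) (c : ℝ) : intg (single k c) = if k = -1 then c else 0 :=
  Finsupp.single_apply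

lemma qn_neg (q : ℝ) (k : ℤ) : qn q (-k) = - qn q k := by
  unfold qn; rw [neg_neg, ← neg_div]; ring_nf

lemma psiT_zero_left (q : ℝ) (g : LP) : psiT q 0 g = 0 := by
  simp only [psiT, tauInv, tau_zero, dd, dq_zero, lmul_zero_left, intg]
  simp
lemma psiT_zero_right (q : ℝ) (f : LP) : psiT q f 0 = 0 := by
  simp only [psiT, lmul_zero_right, intg]; simp
lemma psiT_add_left (q : ℝ) (f f' g : LP) :
    psiT q (f + f') g = psiT q f g + psiT q f' g := by
  simp only [psiT, tauInv, tau_add, dd, dq_add, lmul_add_left, intg, Finsupp.add_apply]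
  ring
lemma psiT_add_right (q : ℝ) (f g g' : LP) :
    psiT q f (g + g') = psiT q f g + psiT q f g' := by
  simp only [psiT, lmul_add_right, intg, Finsupp.add_apply]; ring

lemma psiT_single (q : ℝ) (hq0 : q ≠ 0) (n m : ℤ) (a b : ℝ) :
    psiT q (single n a) (single m b) = - psiT q (single m b) (single n a) := by
  simp only [psiT, tauInv, tau_single, dd, dq_single, lmul_single_single, intg_single]
  have hc : (n - 1 - 1 - 1 + m = -1) ↔ (m - 1 - 1 - 1 + n = -1) := by omega
  split_ifs with h1 h2 h2
  · have hm : m = 2 - n := by omega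
    subst hm
    rw [show (n - 1 - 1 : ℤ) = n - 2 by ring, show (2 - n - 1 - 1 : ℤ) = -n by ring,
      show (2 - n - 1 : ℤ) = 1 - n by ring, qn_neg,
      show qn q (2 - n) = - qn q (n - 2) by rw [show (2 - n : ℤ) = -(n - 2) by ring, qn_neg],
      show qn q (1 - n) = - qn q (n - 1) by rw [show (1 - n : ℤ) = -(n - 1) by ring, qn_neg]]
    have hp : ∀ k : ℤ, q^(k-2) * (q^(k-1) * (q^k * (q⁻¹^k * (q⁻¹^k * q⁻¹^k)))) = q^(-3:ℤ) := by
      intro k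
      rw [inv_zpow, ← zpow_neg, ← zpow_add₀ hq0, ← zpow_add₀ hq0, ← zpow_add₀ hq0,
        ← zpow_add₀ hq0, ← zpow_add₀ hq0]
      congr 1; ring
    have h1 := hp n
    have h2 := hp (2 - n)
    rw [show (2 - n - 2 : ℤ) = -n by ring, show (2 - n - 1 : ℤ) = 1 - n by ring] at h2
    linear_combination (q⁻¹ * qn q (n-2) * qn q (n-1) * qn q n * a * b) * (h1 - h2)
  · exact absurd (hc.mp h1) h2
  · exact absurd (hc.mpr h2) h1
  · simp

lemma psiT_single_left (q : ℝ) (hq0 : q ≠ 0) (n : ℤ) (a : ℝ) (g : LP) :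
    psiT q (single n a) g = - psiT q g (single n a) := by
  induction g using Finsupp.induction with
  | zero => rw [psiT_zero_left, psiT_zero_right, neg_zero]
  | single_add m b g hm hb ih =>
    rw [psiT_add_right, psiT_add_left, ih, psiT_single q hq0 n m a b, neg_add]

theorem stmt10 (q : ℝ) (hq0 : q ≠ 0) (hq1 : q ≠ 1) (hqm1 : q ≠ -1) (f g : LP) :
    psiT q f g = - psiT q g f := by
  induction f using Finsupp.induction with
  | zero => rw [psiT_zero_left, psiT_zero_right, neg_zero]
  | single_add n a f hn ha ih =>
    rw [psiT_add_left, psiT_add_right, ih, psiT_single_left q hq0 n a g, neg_add]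
end
end

section
/- The bilinear form ψ(f∂, g∂) = q^{-1} ∫ g ∂³ f, equal to Σ_n f_{n+1} g_{-n+1} [n+1][n][n−1] q^{3n−1}, is NOT antisymmetric in general: there exist Laurent polynomials f, g with ψ(f∂,g∂) ≠ −ψ(g∂,f∂), provided q ≠ 0, ±1. -/
open Finsupp

noncomputable section

/-- ψ(f∂, g∂) = q⁻¹ ∫ g (∂³ f). -/
def psi (q : ℝ) (f g : LP) : ℝ := q⁻¹ * intg (lmul g (dd q (dd q (dd q f))))

theorem stmt11 (q : ℝ) (hq0 : q ≠ 0) (hq1 : q ≠ 1) (hqm1 : q ≠ -1) :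
    ∃ f g : LP, psi q f g ≠ - psi q g f := by
  refine ⟨Finsupp.single 3 1, Finsupp.single (-1) 1, ?_⟩
  simp only [psi, intg, lmul, dd, dq, tau, Finsupp.sum_single_index, Finsupp.single_apply,
    mul_zero, zero_mul, Finsupp.single_zero, mul_one, one_mul]
  norm_num [qn]
  have h2 : q ^ 2 - 1 ≠ 0 := by
    intro h
    have : (q - 1) * (q + 1) = 0 := by nlinarith [sq_nonneg q]
    rcases mul_eq_zero.mp this with h' | h'
    · exact hq1 (by linarith)
    · exact hqm1 (by linarith)
  have hd : q - q⁻¹ ≠ 0 := by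
    intro h; apply h2; field_simp at h; nlinarith
  intro h
  have h2x : q * q - 1 ≠ 0 := fun h => h2 (by nlinarith)
  field_simp [h2x] at h
  ring_nf at h
  have key : q ^ 7 * (q ^ 2 - 1) ^ 6 * (q ^ 2 + 1) ^ 2 * (q ^ 4 + q ^ 2 + 1) ^ 2 *
      (q ^ 4 - q ^ 2 + 1) = 0 := by linear_combination q ^ 7 * (q ^ 2 - 1) ^ 2 * h
  have h7 : q ^ 7 ≠ 0 := pow_ne_zero _ hq0
  have h6 : (q ^ 2 - 1) ^ 6 ≠ 0 := pow_ne_zero _ h2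
  have p1 : (0:ℝ) < (q ^ 2 + 1) ^ 2 := by positivity
  have p2 : (0:ℝ) < (q ^ 4 + q ^ 2 + 1) ^ 2 := by positivity
  have p3 : (0:ℝ) < q ^ 4 - q ^ 2 + 1 := by nlinarith [sq_nonneg (q ^ 2 - 1), sq_nonneg q]
  rcases mul_eq_zero.mp key with k | k
  · rcases mul_eq_zero.mp k with k | k
    · rcases mul_eq_zero.mp k with k | k
      · rcases mul_eq_zero.mp k with k | k
        · exact h7 k
        · exact h6 k
      · linarith
    · linarith
  · linarith
end
end
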